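/- arXiv:2510.25236 — 2 statements merged into one kernel-verified Lean document; each statement's English description precedes it below -/
import Mathlib

section
/- Let L : ℝ^n → ℝ be a convex differentiable function whose gradient is Lipschitz with constant L₀ > 0, let b ∈ ℝ^n be a fixed point, and let λ > ‖∇L(b)‖₂. Then for any point x with ‖x - b‖₂ ≤ (λ - ‖∇L(b)‖₂)/L₀, the point x is the unique minimizer of α ↦ L(α) + λ‖x - α‖₂ over ℝ^n; in particular min_α (L(α) + λ‖x - α‖₂) = L(x). -/
open InnerProductSpace Set

variable {E : Type*} [NormedAddCommGroup E] [InnerProductSpace ℝ E] [CompleteSpace E]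

local notation "⟪" x ", " y "⟫" => @inner ℝ _ _ x y

/-- derivative of L along a line -/
lemma line_deriv (L : E → ℝ) (g : E → E) (hgrad : ∀ x, HasGradientAt L (g x) x)
    (u v : E) (t : ℝ) :
    HasDerivAt (fun t : ℝ => L (u + t • (v - u))) ⟪g (u + t • (v - u)), v - u⟫ t := by
  have h1 : HasDerivAt (fun t : ℝ => u + t • (v - u)) (v - u) t := by
    simpa using ((hasDerivAt_id t).smul_const (v - u)).const_add u
  have h2 := ((hgrad (u + t • (v - u))).hasFDerivAt).comp_hasDerivAt t h1
  simp at h2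
  exact h2

/-- first-order convexity inequality -/
lemma grad_lower (L : E → ℝ) (g : E → E) (hconv : ConvexOn ℝ Set.univ L)
    (hgrad : ∀ x, HasGradientAt L (g x) x) (u v : E) :
    L u + ⟪g u, v - u⟫ ≤ L v := by
  set ψ : ℝ → ℝ := fun t => L (u + t • (v - u)) with hψ
  have hψconv : ConvexOn ℝ Set.univ ψ := by
    have h := hconv.comp_affineMap (AffineMap.lineMap u v : ℝ →ᵃ[ℝ] E)
    simp only [Set.preimage_univ] at h
    suffices e : ψ = L ∘ (AffineMap.lineMap u v : ℝ →ᵃ[ℝ] E) by rw [e]; exact h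
    ext t
    show L (u + t • (v - u)) = L ((AffineMap.lineMap u v : ℝ →ᵃ[ℝ] E) t)
    rw [AffineMap.lineMap_apply_module', add_comm]
  have hd : HasDerivAt ψ ⟪g u, v - u⟫ 0 := by
    have := line_deriv L g hgrad u v 0
    simpa using this
  have := hψconv.le_slope_of_hasDerivAt (mem_univ (0:ℝ)) (mem_univ (1:ℝ)) one_pos hd
  rw [slope_def_field] at this
  have hψ0 : ψ 0 = L u := by simp [ψ]
  have hψ1 : ψ 1 = L v := by simp [ψ]
  rw [hψ0, hψ1] at this
  simp only [sub_zero, div_one] at this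
  linarith

/-- descent lemma -/
lemma descent (L : E → ℝ) (g : E → E) (L₀ : ℝ) (hL₀ : 0 < L₀)
    (hgrad : ∀ x, HasGradientAt L (g x) x)
    (hlip : ∀ x y, ‖g x - g y‖ ≤ L₀ * ‖x - y‖) (u v : E) :
    L v ≤ L u + ⟪g u, v - u⟫ + L₀ / 2 * ‖v - u‖ ^ 2 := by
  set f : ℝ → ℝ := fun t =>
    L (u + t • (v - u)) - t * ⟪g u, v - u⟫ - L₀ / 2 * t ^ 2 * ‖v - u‖ ^ 2 with hf
  have hd : ∀ t : ℝ, HasDerivAt f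
      (⟪g (u + t • (v - u)), v - u⟫ - ⟪g u, v - u⟫ - L₀ * t * ‖v - u‖ ^ 2) t := by
    intro t
    have h1 := line_deriv L g hgrad u v t
    have h2 : HasDerivAt (fun t : ℝ => t * ⟪g u, v - u⟫) ⟪g u, v - u⟫ t := by
      simpa using (hasDerivAt_id t).mul_const ⟪g u, v - u⟫
    have h3 : HasDerivAt (fun t : ℝ => L₀ / 2 * t ^ 2 * ‖v - u‖ ^ 2)
        (L₀ * t * ‖v - u‖ ^ 2) t := by
      have : HasDerivAt (fun t : ℝ => t ^ 2) (2 * t) t := by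
        simpa using hasDerivAt_pow 2 t
      have := ((this.const_mul (L₀ / 2)).mul_const (‖v - u‖ ^ 2))
      exact this.congr_deriv (by ring)
    have := (h1.sub h2).sub h3
    exact this
  have hderiv_nonpos : ∀ t ∈ interior (Icc (0:ℝ) 1), deriv f t ≤ 0 := by
    intro t ht
    rw [interior_Icc] at ht
    rw [(hd t).deriv]
    have hcs : ⟪g (u + t • (v - u)) - g u, v - u⟫ ≤ ‖g (u + t • (v - u)) - g u‖ * ‖v - u‖ :=
      real_inner_le_norm _ _
    have hl : ‖g (u + t • (v - u)) - g u‖ ≤ L₀ * (t * ‖v - u‖) := by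
      have := hlip (u + t • (v - u)) u
      simpa [norm_smul, abs_of_pos ht.1] using this
    have h4 : ‖g (u + t • (v - u)) - g u‖ * ‖v - u‖ ≤ L₀ * t * ‖v - u‖ ^ 2 := by
      have := mul_le_mul_of_nonneg_right hl (norm_nonneg (v - u))
      calc ‖g (u + t • (v - u)) - g u‖ * ‖v - u‖ ≤ L₀ * (t * ‖v - u‖) * ‖v - u‖ := this
        _ = L₀ * t * ‖v - u‖ ^ 2 := by ring
    have := hcs.trans h4
    rw [inner_sub_left] at this
    linarith
  have hanti : AntitoneOn f (Icc (0:ℝ) 1) := by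
    apply antitoneOn_of_deriv_nonpos (convex_Icc 0 1)
    · exact fun t _ => ((hd t).continuousAt).continuousWithinAt
    · exact fun t _ => ((hd t).differentiableAt).differentiableWithinAt
    · exact hderiv_nonpos
  have h01 := hanti (Set.left_mem_Icc.2 zero_le_one) (Set.right_mem_Icc.2 zero_le_one)
    zero_le_one
  have hf0 : f 0 = L u := by simp [f]
  have hf1 : f 1 = L v - ⟪g u, v - u⟫ - L₀ / 2 * ‖v - u‖ ^ 2 := by simp [f]
  rw [hf0, hf1] at h01
  linarith

/-- strong convexity-smoothness inequality -/
lemma strong_lower (L : E → ℝ) (g : E → E) (L₀ : ℝ) (hL₀ : 0 < L₀)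
    (hconv : ConvexOn ℝ Set.univ L) (hgrad : ∀ x, HasGradientAt L (g x) x)
    (hlip : ∀ x y, ‖g x - g y‖ ≤ L₀ * ‖x - y‖) (u v : E) :
    L u + ⟪g u, v - u⟫ + ‖g v - g u‖ ^ 2 / (2 * L₀) ≤ L v := by
  set Δ := g v - g u with hΔ
  set w := v - (L₀⁻¹) • Δ with hw
  have hA := grad_lower L g hconv hgrad u w
  have hB := descent L g L₀ hL₀ hgrad hlip v w
  have hwv : w - v = -(L₀⁻¹) • Δ := by rw [hw]; module
  have e1 : ⟪g u, w - u⟫ = ⟪g u, v - u⟫ - L₀⁻¹ * ⟪g u, Δ⟫ := by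
    have : w - u = (v - u) + (-(L₀⁻¹) • Δ) := by rw [hw]; module
    rw [this, inner_add_right, real_inner_smul_right]; ring
  have e2 : ⟪g v, w - v⟫ = -(L₀⁻¹ * ⟪g v, Δ⟫) := by
    rw [hwv, real_inner_smul_right]; ring
  have e3 : ‖w - v‖ ^ 2 = L₀⁻¹ ^ 2 * ‖Δ‖ ^ 2 := by
    rw [hwv, norm_smul]
    simp [mul_pow, abs_of_pos (inv_pos.2 hL₀)]
  have e4 : ⟪g v, Δ⟫ - ⟪g u, Δ⟫ = ‖Δ‖ ^ 2 := by
    rw [← inner_sub_left, ← hΔ, real_inner_self_eq_norm_sq]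
  have hL₀' : L₀ ≠ 0 := ne_of_gt hL₀
  rw [e1] at hA
  rw [e2, e3] at hB
  have hfe : L₀ / 2 * (L₀⁻¹ ^ 2 * ‖Δ‖ ^ 2) = ‖Δ‖ ^ 2 / (2 * L₀) := by
    field_simp
  have h5 : L₀⁻¹ * ⟪g v, Δ⟫ - L₀⁻¹ * ⟪g u, Δ⟫ = ‖Δ‖ ^ 2 / L₀ := by
    rw [← mul_sub, e4]; field_simp
  have h6 : ‖Δ‖ ^ 2 / L₀ - ‖Δ‖ ^ 2 / (2 * L₀) = ‖Δ‖ ^ 2 / (2 * L₀) := by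
    field_simp; ring
  linarith

/-- cocoercivity -/
lemma coco (L : E → ℝ) (g : E → E) (L₀ : ℝ) (hL₀ : 0 < L₀)
    (hconv : ConvexOn ℝ Set.univ L) (hgrad : ∀ x, HasGradientAt L (g x) x)
    (hlip : ∀ x y, ‖g x - g y‖ ≤ L₀ * ‖x - y‖) (u v : E) :
    ‖g v - g u‖ ^ 2 / L₀ ≤ ⟪g v - g u, v - u⟫ := by
  have h1 := strong_lower L g L₀ hL₀ hconv hgrad hlip u v
  have h2 := strong_lower L g L₀ hL₀ hconv hgrad hlip v u
  have e1 : ‖g u - g v‖ = ‖g v - g u‖ := norm_sub_rev _ _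
  rw [e1] at h2
  have e2 : ⟪g v, u - v⟫ = -⟪g v, v - u⟫ := by
    rw [← inner_neg_right]; congr 1; abel
  rw [e2] at h2
  have e3 : ⟪g v - g u, v - u⟫ = ⟪g v, v - u⟫ - ⟪g u, v - u⟫ := by
    rw [inner_sub_left]
  have e4 : ‖g v - g u‖ ^ 2 / (2 * L₀) + ‖g v - g u‖ ^ 2 / (2 * L₀) = ‖g v - g u‖ ^ 2 / L₀ := by
    field_simp; ring
  linarith

lemma eq_of_norm_sq_eq_zero {a b : E} (h : ‖a - b‖ ^ 2 = 0) : a = b := by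
  have h1 : ‖a - b‖ = 0 := by
    have := sq_eq_zero_iff.mp h
    exact this
  exact sub_eq_zero.1 (norm_eq_zero.1 h1)

set_option maxHeartbeats 2000000 in
/-- If `L` is convex and differentiable with `L₀`-Lipschitz gradient, `b` is a fixed
point, and `λ > ‖∇L(b)‖`, then any `x` with `‖x - b‖ ≤ (λ - ‖∇L(b)‖)/L₀` is the unique
minimizer of `α ↦ L α + λ‖x - α‖`; in particular the minimum value is `L x`. -/
theorem stmt0 {n : ℕ} (L : EuclideanSpace ℝ (Fin n) → ℝ)
    (g : EuclideanSpace ℝ (Fin n) → EuclideanSpace ℝ (Fin n))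
    (L₀ lam : ℝ) (hL₀ : 0 < L₀)
    (hconv : ConvexOn ℝ Set.univ L)
    (hgrad : ∀ x, HasGradientAt L (g x) x)
    (hlip : ∀ x y, ‖g x - g y‖ ≤ L₀ * ‖x - y‖)
    (b : EuclideanSpace ℝ (Fin n)) (hlam : ‖g b‖ < lam)
    (x : EuclideanSpace ℝ (Fin n)) (hx : ‖x - b‖ ≤ (lam - ‖g b‖) / L₀) :
    ∀ α, α ≠ x → L x < L α + lam * ‖x - α‖ := by
  intro α hα
  set s := ‖x - α‖ with hsdef
  have hs : 0 < s := norm_pos_iff.2 (sub_ne_zero.2 (Ne.symm hα))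
  have hsax : ‖α - x‖ = s := norm_sub_rev α x
  have hlampos : 0 < lam := lt_of_le_of_lt (norm_nonneg _) hlam
  have hxb : L₀ * ‖x - b‖ ≤ lam - ‖g b‖ := by
    have := (le_div_iff₀ hL₀).1 hx
    linarith
  have hgx_le : ‖g x‖ ≤ lam := by
    have h1 : ‖g x‖ ≤ ‖g b‖ + ‖g x - g b‖ := by
      calc ‖g x‖ = ‖g b + (g x - g b)‖ := by congr 1; abel
        _ ≤ ‖g b‖ + ‖g x - g b‖ := norm_add_le _ _
    have h2 := (hlip x b).trans hxb
    linarith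
  have key := strong_lower L g L₀ hL₀ hconv hgrad hlip x α
  have hCS : -(‖g x‖ * s) ≤ ⟪g x, α - x⟫ := by
    have h1 := real_inner_le_norm (g x) (x - α)
    have h2 : ⟪g x, α - x⟫ = -⟪g x, x - α⟫ := by
      rw [← inner_neg_right]; congr 1; abel
    rw [h2]; rw [← hsdef] at h1; linarith
  by_cases hΔ : g α = g x
  · by_cases hdeg : ⟪g x, α - x⟫ ≤ -(lam * s)
    · exfalso
      have hlamgx : ‖g x‖ = lam := by
        have h1 : lam * s ≤ ‖g x‖ * s := by nlinarith
        exact le_antisymm hgx_le (le_of_mul_le_mul_right h1 hs)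
      have hip : ⟪g x, α - x⟫ = -(lam * s) := by
        rw [hlamgx] at hCS; linarith
      set d := ‖x - b‖ with hddef
      have a1 : ‖g x - g b‖ ≤ L₀ * d := hlip x b
      have a3 : lam ≤ ‖g b‖ + ‖g x - g b‖ := by
        rw [← hlamgx]
        calc ‖g x‖ = ‖g b + (g x - g b)‖ := by congr 1; abel
          _ ≤ ‖g b‖ + ‖g x - g b‖ := norm_add_le _ _
      have hd1 : L₀ * d = lam - ‖g b‖ := le_antisymm hxb (by linarith)
      have hΔ'norm : ‖g x - g b‖ = L₀ * d := by linarith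
      have hd_pos : 0 < d := by nlinarith
      have hco := coco L g L₀ hL₀ hconv hgrad hlip b x
      have hcs2 : ⟪g x - g b, x - b⟫ ≤ ‖g x - g b‖ * d := real_inner_le_norm _ _
      have hipbx : ⟪g x - g b, x - b⟫ = L₀ * d ^ 2 := by
        rw [hΔ'norm] at hco hcs2
        have he : (L₀ * d) ^ 2 / L₀ = L₀ * d ^ 2 := by field_simp
        rw [he] at hco
        nlinarith
      have hvec1 : g x - g b = L₀ • (x - b) := by
        apply eq_of_norm_sq_eq_zero
        rw [norm_sub_sq_real, real_inner_smul_right, norm_smul, hΔ'norm, hipbx,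
          Real.norm_eq_abs, abs_of_pos hL₀, ← hddef]
        ring
      have hipgbgx : ⟪g x, g b⟫ = lam * ‖g b‖ := by
        have hnsq : ‖g x - g b‖ ^ 2 = ‖g x‖ ^ 2 - 2 * ⟪g x, g b⟫ + ‖g b‖ ^ 2 :=
          norm_sub_sq_real _ _
        rw [hΔ'norm, hlamgx, hd1] at hnsq
        nlinarith
      have hipgbxb : ⟪g b, x - b⟫ = ‖g b‖ * d := by
        have h1 : ⟪g b, g x - g b⟫ = L₀ * ⟪g b, x - b⟫ := by
          rw [hvec1, real_inner_smul_right]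
        have h2 : ⟪g b, g x - g b⟫ = ⟪g x, g b⟫ - ‖g b‖ ^ 2 := by
          rw [inner_sub_right, real_inner_comm (g b) (g x), real_inner_self_eq_norm_sq]
        have h3 : L₀ * ⟪g b, x - b⟫ = ‖g b‖ * (lam - ‖g b‖) := by
          rw [← h1, h2, hipgbgx]; ring
        rw [← hd1] at h3
        exact mul_left_cancel₀ (ne_of_gt hL₀)
          (by rw [h3]; ring)
      have hvec2 : d • g b = ‖g b‖ • (x - b) := by
        apply eq_of_norm_sq_eq_zero
        rw [norm_sub_sq_real, real_inner_smul_left, real_inner_smul_right, hipgbxb,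
          norm_smul, norm_smul, Real.norm_eq_abs, Real.norm_eq_abs, abs_of_pos hd_pos,
          abs_of_nonneg (norm_nonneg (g b)), ← hddef]
        ring
      have hvec3 : d • g x = lam • (x - b) := by
        have hgx_eq : g x = g b + L₀ • (x - b) := by rw [← hvec1]; abel
        rw [hgx_eq, smul_add, smul_smul, hvec2, ← add_smul]
        congr 1
        linarith
      have hvec4 : lam • (α - x) = -(s • g x) := by
        have h0 : s • g x + lam • (α - x) = 0 := by
          have hn : ‖s • g x + lam • (α - x)‖ ^ 2 = 0 := by
            rw [norm_add_sq_real, real_inner_smul_left, real_inner_smul_right, hip,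
              norm_smul, norm_smul, Real.norm_eq_abs, Real.norm_eq_abs, abs_of_pos hs,
              abs_of_pos hlampos, hsax, hlamgx]
            ring
          have h1 : ‖(s • g x + lam • (α - x)) - 0‖ ^ 2 = 0 := by
            rw [sub_zero]; exact hn
          exact eq_of_norm_sq_eq_zero h1
        exact eq_neg_of_add_eq_zero_right h0
      have hipxbgx : ⟪x - b, g x⟫ = lam * d := by
        have h1 : ⟪x - b, d • g x⟫ = lam * d ^ 2 := by
          rw [hvec3, real_inner_smul_right, real_inner_self_eq_norm_sq, ← hddef]; try ring
        rw [real_inner_smul_right] at h1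
        exact mul_left_cancel₀ (ne_of_gt hd_pos) (by rw [h1]; ring)
      have hipxbax : ⟪x - b, α - x⟫ = -(s * d) := by
        have h1 : ⟪x - b, lam • (α - x)⟫ = -(s * (lam * d)) := by
          rw [hvec4, inner_neg_right, real_inner_smul_right, hipxbgx]; try ring
        rw [real_inner_smul_right] at h1
        exact mul_left_cancel₀ (ne_of_gt hlampos) (by rw [h1]; ring)
      have hcoa := coco L g L₀ hL₀ hconv hgrad hlip b α
      rw [hΔ, hΔ'norm] at hcoa
      have hiplhs : ⟪g x - g b, α - b⟫ = L₀ * (d ^ 2 - s * d) := by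
        have hab : α - b = (α - x) + (x - b) := by abel
        rw [hvec1, real_inner_smul_left, hab, inner_add_right,
          hipxbax, real_inner_self_eq_norm_sq, ← hddef]
        ring
      rw [hiplhs] at hcoa
      have he2 : (L₀ * d) ^ 2 / L₀ = L₀ * d ^ 2 := by field_simp
      rw [he2] at hcoa
      nlinarith
    · push_neg at hdeg
      have hnn : 0 ≤ ‖g α - g x‖ ^ 2 / (2 * L₀) := by positivity
      linarith
  · have hpos : 0 < ‖g α - g x‖ ^ 2 / (2 * L₀) := by
      apply div_pos _ (by linarith)
      exact pow_pos (norm_pos_iff.2 (sub_ne_zero.2 hΔ)) 2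
    have h2 : -(lam * s) ≤ ⟪g x, α - x⟫ := by nlinarith
    linarith
end

section
/- Let A ∈ ℝ^{m×n} be a nonzero matrix, let z₁,…,z_K ∈ ℝ^n with ‖z_k‖₂ ≤ α₁ for all k, and let w₁,…,w_K ≥ 0 with Σ w_k > 0. Suppose Σ_k w_k z_k z_kᵀ ⪰ (α₂² Σ_k w_k / n) I_n for some 0 < α₂ ≤ α₁. Then for every t ∈ [0, α₂/√n], the sum of w_k over indices k with ‖A z_k‖₂ > t‖A‖₂ is at least ((α₂²/n − t²)/(α₁² − t²)) · Σ_{j=1}^K w_j. -/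
open scoped RealInnerProductSpace

/-- The spectral (ℓ₂ operator) norm of a real matrix. -/
noncomputable def specNorm {m n : Type*} [Fintype m] [Fintype n] [DecidableEq n]
    (A : Matrix m n ℝ) : ℝ :=
  ‖LinearMap.toContinuousLinearMap (Matrix.toEuclideanLin A)‖

section aux

variable {E F : Type*} [NormedAddCommGroup E] [InnerProductSpace ℝ E]
  [NormedAddCommGroup F] [InnerProductSpace ℝ F]

/-- If `v` is a unit vector attaining the operator norm of `L`, then
`⟪L v, L x⟫ = ‖L‖ ^ 2 * ⟪v, x⟫` for every `x`. -/
theorem aux_inner_eq (L : E →L[ℝ] F) (v : E) (hv1 : ‖v‖ = 1) (hvmax : ‖L v‖ = ‖L‖)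
    (x : E) : ⟪L v, L x⟫ = ‖L‖ ^ 2 * ⟪v, x⟫ := by
  set σ := ‖L‖ with hσ
  set B : ℝ := ⟪L v, L x⟫ - σ ^ 2 * ⟪v, x⟫ with hB
  set C : ℝ := σ ^ 2 * ‖x‖ ^ 2 - ‖L x‖ ^ 2 with hC
  have hCpos : 0 ≤ C := by
    have h1 : ‖L x‖ ≤ σ * ‖x‖ := L.le_opNorm x
    have h2 : 0 ≤ σ * ‖x‖ := mul_nonneg (norm_nonneg _) (norm_nonneg _)
    have := mul_self_le_mul_self (norm_nonneg _) h1
    simp only [hC]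
    nlinarith
  have key : ∀ s : ℝ, 2 * s * B ≤ s ^ 2 * C := by
    intro s
    have h1 : ‖L (v + s • x)‖ ≤ σ * ‖v + s • x‖ := L.le_opNorm _
    have h2 : ‖L (v + s • x)‖ ^ 2 ≤ σ ^ 2 * ‖v + s • x‖ ^ 2 := by
      have := mul_self_le_mul_self (norm_nonneg _) h1
      nlinarith [norm_nonneg (v + s • x), norm_nonneg (L (v + s • x))]
    have e1 : ‖L (v + s • x)‖ ^ 2 = ‖L v‖ ^ 2 + 2 * (s * ⟪L v, L x⟫) + s ^ 2 * ‖L x‖ ^ 2 := by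
      rw [map_add, map_smul, norm_add_sq_real, inner_smul_right, norm_smul]
      simp [mul_pow, sq_abs]
    have e2 : ‖v + s • x‖ ^ 2 = ‖v‖ ^ 2 + 2 * (s * ⟪v, x⟫) + s ^ 2 * ‖x‖ ^ 2 := by
      rw [norm_add_sq_real, inner_smul_right, norm_smul]
      simp [mul_pow, sq_abs]
    rw [e1, e2] at h2
    have hv2 : ‖L v‖ ^ 2 = σ ^ 2 := by rw [hvmax]
    rw [hv2, hv1] at h2
    simp only [hB, hC]
    nlinarith [h2]
  have hC1 : (0 : ℝ) < C + 1 := by linarith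
  have hkey := key (B / (C + 1))
  have hB0 : B = 0 := by
    rw [div_pow] at hkey
    rw [show 2 * (B / (C + 1)) * B = 2 * B ^ 2 / (C + 1) by ring,
      div_mul_eq_mul_div, div_le_div_iff₀ hC1 (by positivity)] at hkey
    nlinarith [sq_nonneg B]
  have : ⟪L v, L x⟫ - σ ^ 2 * ⟪v, x⟫ = 0 := hB0
  linarith

end aux

open Classical in
/-- Lemma on fractions of weighted vectors with large image under `A`. -/
theorem stmt3 {m n K : ℕ} (A : Matrix (Fin m) (Fin n) ℝ) (hA : A ≠ 0)
    (z : Fin K → EuclideanSpace ℝ (Fin n)) (w : Fin K → ℝ)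
    (α₁ α₂ : ℝ) (hα₂ : 0 < α₂) (hα₁₂ : α₂ ≤ α₁)
    (hz : ∀ k, ‖z k‖ ≤ α₁) (hw : ∀ k, 0 ≤ w k) (hwpos : 0 < ∑ k, w k)
    (hpsd : ∀ v : EuclideanSpace ℝ (Fin n),
      α₂ ^ 2 * (∑ k, w k) / n * ‖v‖ ^ 2 ≤ ∑ k, w k * ⟪z k, v⟫ ^ 2)
    (t : ℝ) (ht0 : 0 ≤ t) (ht : t ≤ α₂ / Real.sqrt n) :
    (α₂ ^ 2 / n - t ^ 2) / (α₁ ^ 2 - t ^ 2) * ∑ j, w j ≤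
      ∑ k ∈ Finset.univ.filter
        (fun k => t * specNorm A < ‖Matrix.toEuclideanLin A (z k)‖), w k := by
  -- dispatch n = 0
  rcases Nat.eq_zero_or_pos n with hn | hn
  · subst hn
    exact absurd (by ext i j; exact j.elim0) hA
  set L : EuclideanSpace ℝ (Fin n) →L[ℝ] EuclideanSpace ℝ (Fin m) :=
    LinearMap.toContinuousLinearMap (Matrix.toEuclideanLin A) with hLdef
  have hLapp : ∀ x, L x = Matrix.toEuclideanLin A x := fun x => rfl
  have hspec : specNorm A = ‖L‖ := rfl
  have hLne : L ≠ 0 := by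
    intro h
    apply hA
    have h1 : Matrix.toEuclideanLin A = 0 := LinearEquiv.map_eq_zero_iff _ |>.mp h
    exact LinearEquiv.map_eq_zero_iff _ |>.mp h1
  have hσpos : 0 < ‖L‖ := norm_pos_iff.mpr hLne
  -- a norm-attaining unit vector
  haveI : Nonempty (Fin n) := ⟨⟨0, hn⟩⟩
  obtain ⟨v, hv1, hvmax⟩ : ∃ v : EuclideanSpace ℝ (Fin n), ‖v‖ = 1 ∧ ‖L v‖ = ‖L‖ := by
    obtain ⟨x0, hx0⟩ := exists_norm_eq (EuclideanSpace ℝ (Fin n)) (zero_le_one)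
    have hc : IsCompact (Metric.sphere (0 : EuclideanSpace ℝ (Fin n)) 1) := isCompact_sphere 0 1
    obtain ⟨v, hv, hmax⟩ := hc.exists_isMaxOn ⟨x0, by simpa using hx0⟩
      ((L.continuous.norm).continuousOn)
    have hv1 : ‖v‖ = 1 := by simpa using hv
    refine ⟨v, hv1, le_antisymm (by simpa [hv1] using L.le_opNorm v) ?_⟩
    exact ContinuousLinearMap.opNorm_le_of_unit_norm (norm_nonneg _)
      (fun u hu => hmax (by simpa using hu))
  -- key orthogonality consequence
  have hkey : ∀ x, ⟪L v, L x⟫ = ‖L‖ ^ 2 * ⟪v, x⟫ := aux_inner_eq L v hv1 hvmax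
  -- small inner product off the filter set
  set S := Finset.univ.filter
    (fun k => t * specNorm A < ‖Matrix.toEuclideanLin A (z k)‖) with hS
  have hsmall : ∀ k, k ∉ S → ⟪z k, v⟫ ^ 2 ≤ t ^ 2 := by
    intro k hk
    have hk' : ‖L (z k)‖ ≤ t * ‖L‖ := by
      simp only [hS, Finset.mem_filter, Finset.mem_univ, true_and, not_lt, hspec] at hk
      simpa [hLapp] using hk
    have h1 : |⟪L v, L (z k)⟫| ≤ ‖L v‖ * ‖L (z k)‖ := abs_real_inner_le_norm _ _
    rw [hkey, hvmax] at h1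
    have h2 : ‖L‖ ^ 2 * |⟪v, z k⟫| ≤ ‖L‖ * (t * ‖L‖) := by
      calc ‖L‖ ^ 2 * |⟪v, z k⟫| = |‖L‖ ^ 2 * ⟪v, z k⟫| := by
            rw [abs_mul, abs_of_nonneg (sq_nonneg ‖L‖)]
        _ ≤ ‖L‖ * ‖L (z k)‖ := h1
        _ ≤ ‖L‖ * (t * ‖L‖) := by
            exact mul_le_mul_of_nonneg_left hk' (norm_nonneg _)
      
    have h3 : |⟪v, z k⟫| ≤ t := by
      have := (mul_le_mul_iff_right₀ (by positivity : (0:ℝ) < ‖L‖ ^ 2)).mp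
        (by nlinarith : ‖L‖ ^ 2 * |⟪v, z k⟫| ≤ ‖L‖ ^ 2 * t)
      exact this
    have : ⟪z k, v⟫ ^ 2 = |⟪v, z k⟫| ^ 2 := by
      rw [sq_abs, real_inner_comm]
    rw [this]
    exact pow_le_pow_left₀ (abs_nonneg _) h3 2
  have hbig : ∀ k, ⟪z k, v⟫ ^ 2 ≤ α₁ ^ 2 := by
    intro k
    have h1 : |⟪z k, v⟫| ≤ ‖z k‖ * ‖v‖ := abs_real_inner_le_norm _ _
    rw [hv1, mul_one] at h1
    have h2 : |⟪z k, v⟫| ≤ α₁ := h1.trans (hz k)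
    calc ⟪z k, v⟫ ^ 2 = |⟪z k, v⟫| ^ 2 := (sq_abs _).symm
      _ ≤ α₁ ^ 2 := pow_le_pow_left₀ (abs_nonneg _) h2 2
  -- main inequality
  set W := ∑ k, w k with hW
  set WS := ∑ k ∈ S, w k with hWS
  clear_value W WS
  have hWSnn : 0 ≤ WS := hWS ▸ Finset.sum_nonneg fun k _ => hw k
  have hWSle : WS ≤ W := by
    rw [hW, hWS]
    exact Finset.sum_le_sum_of_subset_of_nonneg (Finset.subset_univ S) (fun k _ _ => hw k)
  have h1 : α₂ ^ 2 * W / n ≤ ∑ k, w k * ⟪z k, v⟫ ^ 2 := by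
    simpa [hv1] using hpsd v
  have hsplit : ∑ k ∈ Finset.univ \ S, (w k * ⟪z k, v⟫ ^ 2) + ∑ k ∈ S, (w k * ⟪z k, v⟫ ^ 2)
      = ∑ k, w k * ⟪z k, v⟫ ^ 2 :=
    Finset.sum_sdiff (Finset.subset_univ S)
  have h2 : ∑ k ∈ S, w k * ⟪z k, v⟫ ^ 2 ≤ α₁ ^ 2 * WS := by
    rw [hWS, Finset.mul_sum]
    exact Finset.sum_le_sum fun k _ => by
      rw [mul_comm (α₁ ^ 2) (w k)]
      exact mul_le_mul_of_nonneg_left (hbig k) (hw k)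
  have h3 : ∑ k ∈ Finset.univ \ S, w k * ⟪z k, v⟫ ^ 2 ≤ t ^ 2 * (W - WS) := by
    have : ∑ k ∈ Finset.univ \ S, w k * ⟪z k, v⟫ ^ 2 ≤ ∑ k ∈ Finset.univ \ S, w k * t ^ 2 := by
      refine Finset.sum_le_sum fun k hk => ?_
      have hk' : k ∉ S := (Finset.mem_sdiff.mp hk).2
      exact mul_le_mul_of_nonneg_left (hsmall k hk') (hw k)
    rw [← Finset.sum_mul] at this
    have hsd : ∑ k ∈ Finset.univ \ S, w k = W - WS := by
      have h := Finset.sum_sdiff (f := w) (Finset.subset_univ S)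
      rw [hW, hWS]
      linarith [h]
    rw [hsd] at this
    linarith [this]
  have hmain : α₂ ^ 2 * W / n - t ^ 2 * W ≤ α₁ ^ 2 * WS - t ^ 2 * WS := by
    have h4 : α₂ ^ 2 * W / n ≤ α₁ ^ 2 * WS + t ^ 2 * (W - WS) := by
      rw [← hsplit] at h1
      linarith [h2, h3, h1]
    linarith [h4]
  -- bounds on t
  have hnpos : (0 : ℝ) < n := by exact_mod_cast hn
  have hsq1 : (1 : ℝ) ≤ Real.sqrt n := by
    rw [show (1:ℝ) = Real.sqrt 1 by simp]
    exact Real.sqrt_le_sqrt (by exact_mod_cast hn)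
  have htα₁ : t ≤ α₁ := le_trans ht (le_trans (div_le_self hα₂.le hsq1) hα₁₂)
  have hden : 0 ≤ α₁ ^ 2 - t ^ 2 := sub_nonneg.mpr (pow_le_pow_left₀ ht0 htα₁ 2)
  rcases eq_or_lt_of_le hden with hd0 | hdpos
  · rw [← hd0]
    simpa using hWSnn
  · rw [div_mul_eq_mul_div, div_le_iff₀ hdpos]
    calc (α₂ ^ 2 / ↑n - t ^ 2) * W = α₂ ^ 2 * W / ↑n - t ^ 2 * W := by ring
      _ ≤ α₁ ^ 2 * WS - t ^ 2 * WS := hmain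
      _ = WS * (α₁ ^ 2 - t ^ 2) := by ring
end
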